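/- Let ℓ ≥ 3 be an integer and let k be an integer with 2 ≤ k ≤ ℓ−1. For η : Fin N → ℤ and a ∈ ℤ, the following are equivalent: (a) (η, a) ∈ U^(1) and ℓ·a − Σ_{i ∈ Fin N} η(i) = ℓ − k; (b) the exponent vector (η − k, a − (2k+1)), where (η − k)(i) = η(i) − k for all i, belongs to U^(0)_0. (This shows that the K-span C_k of the monomials T^η with η ∈ U^(1) of margin ℓ−k is a rank 1 free module over the Ehrhart ring of the face {f ∈ STAB(G) : f⁺(V) = ℓ}, with basis T^{η_k}.) -/

import Mathlib

/-- `(μ, d)` belongs to `U^(n)` for the cycle of length `2ℓ+1`. -/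
def inU (ℓ : ℕ) (n : ℤ) (μ : Fin (2 * ℓ + 1) → ℤ) (d : ℤ) : Prop :=
  (∀ i, n ≤ μ i) ∧
  (∀ i : Fin (2 * ℓ + 1), μ i + μ (i + 1) ≤ d - n) ∧
  (∑ i, μ i ≤ (ℓ : ℤ) * d - n)

private lemma pair_sum (g : ℕ → ℤ) (n : ℕ) :
    ∑ t ∈ Finset.range (2 * n), g t
      = ∑ j ∈ Finset.range n, (g (2 * j) + g (2 * j + 1)) := by
  induction n with
  | zero => simp
  | succ n ih =>
    have h : 2 * (n + 1) = (2 * n + 1) + 1 := by ring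
    rw [h, Finset.sum_range_succ, Finset.sum_range_succ, ih, Finset.sum_range_succ]
    ring

open Fin.NatCast Fin.CommRing in
private lemma lower_bound (ℓ : ℕ) (η : Fin (2 * ℓ + 1) → ℤ) (a : ℤ)
    (hpair : ∀ i : Fin (2 * ℓ + 1), η i + η (i + 1) ≤ a - 1)
    (i : Fin (2 * ℓ + 1)) :
    (∑ j, η j) - η i ≤ (ℓ : ℤ) * (a - 1) := by
  have h1 : ∑ j, η j = ∑ j : Fin (2 * ℓ + 1), η (i + j) :=
    (Fintype.sum_equiv (Equiv.addLeft i) _ _ (fun j => rfl)).symm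
  have h2 : ∑ j : Fin (2 * ℓ + 1), η (i + j)
      = ∑ t ∈ Finset.range (2 * ℓ + 1), η (i + (t : Fin (2 * ℓ + 1))) := by
    rw [← Fin.sum_univ_eq_sum_range (fun t => η (i + (t : Fin (2 * ℓ + 1))))]
    exact Fintype.sum_congr _ _ (fun j => by rw [Fin.cast_val_eq_self])
  have h3 : ∑ t ∈ Finset.range (2 * ℓ + 1), η (i + (t : Fin (2 * ℓ + 1)))
      = (∑ t ∈ Finset.range (2 * ℓ), η (i + ((t + 1 : ℕ) : Fin (2 * ℓ + 1))))
        + η (i + ((0 : ℕ) : Fin (2 * ℓ + 1))) :=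
    Finset.sum_range_succ' _ _
  have h4 : η (i + ((0 : ℕ) : Fin (2 * ℓ + 1))) = η i := by
    norm_num
  have h5 := pair_sum (fun t => η (i + ((t + 1 : ℕ) : Fin (2 * ℓ + 1)))) ℓ
  have h6 : ∑ j ∈ Finset.range ℓ,
      (η (i + ((2 * j + 1 : ℕ) : Fin (2 * ℓ + 1)))
        + η (i + ((2 * j + 1 + 1 : ℕ) : Fin (2 * ℓ + 1)))) ≤ (ℓ : ℤ) * (a - 1) := by
    calc ∑ j ∈ Finset.range ℓ,
        (η (i + ((2 * j + 1 : ℕ) : Fin (2 * ℓ + 1)))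
          + η (i + ((2 * j + 1 + 1 : ℕ) : Fin (2 * ℓ + 1))))
        ≤ ∑ _j ∈ Finset.range ℓ, (a - 1) := by
          apply Finset.sum_le_sum
          intro j _
          have hc : ((2 * j + 1 + 1 : ℕ) : Fin (2 * ℓ + 1))
              = ((2 * j + 1 : ℕ) : Fin (2 * ℓ + 1)) + 1 := by
            push_cast; ring
          rw [hc, ← add_assoc]
          exact hpair (i + ((2 * j + 1 : ℕ) : Fin (2 * ℓ + 1)))
      _ = (ℓ : ℤ) * (a - 1) := by
          rw [Finset.sum_const, Finset.card_range, nsmul_eq_mul]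
  rw [h1, h2, h3, h4]
  linarith [h5, h6]

theorem stmt_11 (ℓ : ℕ) (hℓ : 3 ≤ ℓ) (k : ℤ) (hk2 : 2 ≤ k) (hkl : k ≤ (ℓ : ℤ) - 1)
    (η : Fin (2 * ℓ + 1) → ℤ) (a : ℤ) :
    (inU ℓ 1 η a ∧ (ℓ : ℤ) * a - ∑ i, η i = (ℓ : ℤ) - k) ↔
    (inU ℓ 0 (fun i => η i - k) (a - (2 * k + 1)) ∧
      ∑ i, (η i - k) = (ℓ : ℤ) * (a - (2 * k + 1))) := by
  have hsum : ∑ i, (η i - k) = (∑ i, η i) - (2 * (ℓ : ℤ) + 1) * k := by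
    rw [Finset.sum_sub_distrib, Finset.sum_const, Finset.card_univ, Fintype.card_fin]
    push_cast
    ring
  constructor
  · rintro ⟨⟨h1, h2, h3⟩, heq⟩
    refine ⟨⟨?_, ?_, ?_⟩, ?_⟩
    · intro i
      have hb := lower_bound ℓ η a (fun j => by have := h2 j; linarith) i
      simp only
      linarith
    · intro i
      have := h2 i
      simp only
      linarith
    · have : ∑ i, (η i - k) = (ℓ : ℤ) * (a - (2 * k + 1)) := by
        linear_combination hsum - heq
      linarith [this]
    · linear_combination hsum - heq
  · rintro ⟨⟨h1, h2, h3⟩, heq⟩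
    have hS : ∑ i, η i = (ℓ : ℤ) * a - (ℓ : ℤ) + k := by
      linear_combination heq - hsum
    refine ⟨⟨?_, ?_, ?_⟩, ?_⟩
    · intro i
      have := h1 i
      simp only at this
      linarith
    · intro i
      have := h2 i
      simp only at this
      linarith
    · linarith
    · linarith
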